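/- Under the stated assumptions, the energy functional I is bounded from below on S: there exists c ∈ ℝ such that I(u,v) ≥ c for all (u,v) ∈ S. -/

import Mathlib

open MeasureTheory ENNReal Filter

private lemma measurable_rpow2 : Measurable fun q : ℝ × ℝ => q.1 ^ q.2 := by measurability

/-- The modular `ρ_λ(u) = ∬_{ℝ^{2N}} |u(x) − u(y)|^{p(x,y)} /
(λ^{p(x,y)} |x − y|^{N + p(x,y)s(x,y)}) dx dy`, as a value in `[0,∞]`. -/
noncomputable def fracModular (N : ℕ)
    (p s : EuclideanSpace ℝ (Fin N) × EuclideanSpace ℝ (Fin N) → ℝ)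
    (lam : ℝ) (u : EuclideanSpace ℝ (Fin N) → ℝ) : ℝ≥0∞ :=
  ∫⁻ z : EuclideanSpace ℝ (Fin N) × EuclideanSpace ℝ (Fin N),
    ENNReal.ofReal
      (|u z.1 - u z.2| ^ p z / (lam ^ p z * ‖z.1 - z.2‖ ^ ((N : ℝ) + p z * s z)))

/-- The Gagliardo–Luxemburg norm `‖u‖_{X₀} = inf { λ > 0 : ρ_λ(u) ≤ 1 }`. -/
noncomputable def fracNorm (N : ℕ)
    (p s : EuclideanSpace ℝ (Fin N) × EuclideanSpace ℝ (Fin N) → ℝ)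
    (u : EuclideanSpace ℝ (Fin N) → ℝ) : ℝ :=
  sInf {lam : ℝ | 0 < lam ∧ fracModular N p s lam u ≤ 1}

/-- `δ(u) = ∬_{ℝ^{2N}} (1/p(x,y)) |u(x) − u(y)|^{p(x,y)} / |x − y|^{N + p(x,y)s(x,y)} dx dy`. -/
noncomputable def deltaModular (N : ℕ)
    (p s : EuclideanSpace ℝ (Fin N) × EuclideanSpace ℝ (Fin N) → ℝ)
    (u : EuclideanSpace ℝ (Fin N) → ℝ) : ℝ≥0∞ :=
  ∫⁻ z : EuclideanSpace ℝ (Fin N) × EuclideanSpace ℝ (Fin N),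
    ENNReal.ofReal
      (1 / p z * (|u z.1 - u z.2| ^ p z / ‖z.1 - z.2‖ ^ ((N : ℝ) + p z * s z)))

/-- The Luxemburg norm `‖w‖_{r(·)} = inf { λ > 0 : ∫_Ω |w(x)/λ|^{r(x)} dx ≤ 1 }` on `Ω`. -/
noncomputable def luxNorm {N : ℕ} (Ω : Set (EuclideanSpace ℝ (Fin N)))
    (r : EuclideanSpace ℝ (Fin N) → ℝ) (w : EuclideanSpace ℝ (Fin N) → ℝ) : ℝ :=
  sInf {lam : ℝ | 0 < lam ∧ ∫⁻ x in Ω, ENNReal.ofReal (|w x / lam| ^ r x) ≤ 1}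

/-- Membership in `X₀`: measurable, vanishing a.e. outside `Ω`, with finite norm
(i.e. some `λ > 0` is admissible in the Luxemburg infimum). -/
def memX0 (N : ℕ)
    (p s : EuclideanSpace ℝ (Fin N) × EuclideanSpace ℝ (Fin N) → ℝ)
    (Ω : Set (EuclideanSpace ℝ (Fin N))) (u : EuclideanSpace ℝ (Fin N) → ℝ) : Prop :=
  Measurable u ∧ (∀ᵐ x : EuclideanSpace ℝ (Fin N), x ∉ Ω → u x = 0) ∧
    ∃ lam > (0 : ℝ), fracModular N p s lam u ≤ 1

/-- The energy functional
`I(u,v) = M̃₁(δ(u)) + M̃₂(δ(v)) − ∫_Ω H(u,v) − ∫_Ω a u − ∫_Ω b v`,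
where `M̃ᵢ(t) = ∫_0^t Mᵢ(τ) dτ`. -/
noncomputable def energy (N : ℕ)
    (p s : EuclideanSpace ℝ (Fin N) × EuclideanSpace ℝ (Fin N) → ℝ)
    (Ω : Set (EuclideanSpace ℝ (Fin N))) (M₁ M₂ : ℝ → ℝ) (H : ℝ → ℝ → ℝ)
    (a b : EuclideanSpace ℝ (Fin N) → ℝ) (u v : EuclideanSpace ℝ (Fin N) → ℝ) : ℝ :=
  (∫ τ in Set.Ioo (0 : ℝ) ((deltaModular N p s u).toReal), M₁ τ) +
    (∫ τ in Set.Ioo (0 : ℝ) ((deltaModular N p s v).toReal), M₂ τ) -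
    (∫ x in Ω, H (u x) (v x)) - (∫ x in Ω, a x * u x) - ∫ x in Ω, b x * v x


private lemma num_div_mono' {a b c : ℝ} (hab : a ≤ b) (hc : 0 ≤ c) :
    a / c ≤ b / c := by
  rcases eq_or_lt_of_le hc with h | h
  · simp [← h]
  · gcongr

private lemma div_denom_mono' {a w b c : ℝ} (ha : 0 ≤ a) (hw : 0 ≤ w)
    (hb : 0 < b) (hbc : b ≤ c) : a / (c * w) ≤ a / (b * w) := by
  rcases eq_or_lt_of_le hw with h | h
  · simp [← h]
  · have h1 : 0 < b * w := by positivity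
    exact div_le_div_of_nonneg_left ha h1 (by nlinarith)

private lemma coercive_aux (m γ A β : ℝ) (hm : 0 < m) (hβ : 0 < β) (hβγ : β < γ) (hA : 0 ≤ A) :
    ∃ c : ℝ, ∀ t : ℝ, 0 ≤ t → c ≤ m * t ^ γ - A * t ^ β := by
  set T : ℝ := max 1 ((A / m) ^ (γ - β)⁻¹) with hT
  have hT1 : (1:ℝ) ≤ T := le_max_left _ _
  have hT0 : 0 < T := lt_of_lt_of_le one_pos hT1
  refine ⟨-(A * T ^ β), fun t ht => ?_⟩
  rcases le_total t T with h | h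
  · have h1 : t ^ β ≤ T ^ β := Real.rpow_le_rpow ht h hβ.le
    have h2 : 0 ≤ m * t ^ γ := by positivity
    nlinarith [mul_le_mul_of_nonneg_left h1 hA]
  · have ht0 : 0 < t := lt_of_lt_of_le hT0 h
    have h3 : A / m ≤ T ^ (γ - β) := by
      calc A / m = ((A / m) ^ (γ - β)⁻¹) ^ (γ - β) :=
            (Real.rpow_inv_rpow (by positivity) (sub_ne_zero.mpr (ne_of_gt hβγ))).symm
        _ ≤ T ^ (γ - β) := Real.rpow_le_rpow (by positivity) (le_max_right _ _) (by linarith)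
    have h4 : T ^ (γ - β) ≤ t ^ (γ - β) := Real.rpow_le_rpow hT0.le h (by linarith)
    have h5 : A ≤ m * t ^ (γ - β) := by
      rw [div_le_iff₀ hm] at h3; nlinarith
    have h6 : t ^ γ = t ^ (γ - β) * t ^ β := by
      rw [← Real.rpow_add ht0]; ring_nf
    have h7 : 0 ≤ t ^ β := Real.rpow_nonneg ht0.le _
    have h8 : 0 ≤ A * T ^ β := by positivity
    nlinarith [mul_le_mul_of_nonneg_right h5 h7]

private lemma tildeM_low (M : ℝ → ℝ) (m γ : ℝ) (hm : 0 < m) (hγ : 0 < γ)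
    (hlow : ∀ t : ℝ, 0 < t → m * t ^ (γ - 1) ≤ M t)
    (hint : ∀ t : ℝ, 0 < t → IntegrableOn M (Set.Ioo 0 t) volume)
    (t : ℝ) (ht : 0 ≤ t) :
    m / γ * t ^ γ ≤ ∫ τ in Set.Ioo (0:ℝ) t, M τ := by
  rcases eq_or_lt_of_le ht with h | h
  · simp [← h, Real.zero_rpow hγ.ne']
  · have hrint : IntegrableOn (fun τ : ℝ => m * τ ^ (γ - 1)) (Set.Ioo 0 t) volume := by
      have h1 := (intervalIntegral.intervalIntegrable_rpow' (a := 0) (b := t)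
        (r := γ - 1) (by linarith)).1
      exact (h1.mono_set Set.Ioo_subset_Ioc_self).const_mul m
    have hval : ∫ τ in Set.Ioo (0:ℝ) t, m * τ ^ (γ - 1) = m / γ * t ^ γ := by
      rw [MeasureTheory.integral_const_mul, ← integral_Ioc_eq_integral_Ioo,
        ← intervalIntegral.integral_of_le h.le,
        integral_rpow (Or.inl (by linarith : (-1:ℝ) < γ - 1))]
      rw [sub_add_cancel, Real.zero_rpow hγ.ne']
      ring
    calc m / γ * t ^ γ = ∫ τ in Set.Ioo (0:ℝ) t, m * τ ^ (γ - 1) := hval.symm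
      _ ≤ ∫ τ in Set.Ioo (0:ℝ) t, M τ :=
        setIntegral_mono_on hrint (hint t h) measurableSet_Ioo (fun x hx => hlow x hx.1)

private lemma key_u
    (N : ℕ) (Ω : Set (EuclideanSpace ℝ (Fin N))) (hΩmeas : MeasurableSet Ω)
    (hΩvol : volume Ω ≠ ⊤)
    (p s : EuclideanSpace ℝ (Fin N) × EuclideanSpace ℝ (Fin N) → ℝ)
    (pm pM : ℝ) (hpm1 : 1 < pm) (hple : ∀ z, pm ≤ p z) (hpge : ∀ z, p z ≤ pM)
    (C : ℝ) (hC : 0 < C)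
    (hembed : ∀ w, memX0 N p s Ω w → luxNorm Ω (fun x => p (x, x)) w ≤ C * fracNorm N p s w)
    (hpdiag : Measurable fun x : EuclideanSpace ℝ (Fin N) => p (x, x))
    (u : EuclideanSpace ℝ (Fin N) → ℝ) (hu : memX0 N p s Ω u) :
    deltaModular N p s u ≠ ⊤ ∧
      ∫⁻ x in Ω, ENNReal.ofReal
        (|u x / (C * max 1 ((pM * (deltaModular N p s u).toReal) ^ pm⁻¹) + 1)| ^ p (x, x)) ≤ 1 := by
  obtain ⟨humeas, huvan, lam0, hlam0, hmod0⟩ := hu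
  have hpm0 : (0:ℝ) < pm := by linarith
  have h0p : ∀ z, 0 ≤ p z := fun z => by linarith [hple z]
  have hpM0 : (0:ℝ) ≤ pM := le_trans (h0p (0, 0)) (hpge (0, 0))
  set g : EuclideanSpace ℝ (Fin N) × EuclideanSpace ℝ (Fin N) → ℝ :=
    fun z => |u z.1 - u z.2| ^ p z / ‖z.1 - z.2‖ ^ ((N : ℝ) + p z * s z) with hgdef
  have hg0 : ∀ z, 0 ≤ g z := fun z => by
    apply div_nonneg (Real.rpow_nonneg (abs_nonneg _) _) (Real.rpow_nonneg (norm_nonneg _) _)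
  have hfrac_eq : ∀ lam : ℝ,
      fracModular N p s lam u = ∫⁻ z, ENNReal.ofReal (g z / lam ^ p z) := by
    intro lam
    refine lintegral_congr fun z => ?_
    rw [div_mul_eq_div_div_swap]
  -- Step A: δ(u) is finite
  set L : ℝ := max lam0 1 with hLdef
  have hL1 : (1:ℝ) ≤ L := le_max_right _ _
  have hL0 : (0:ℝ) < L := lt_of_lt_of_le one_pos hL1
  have hmodL : fracModular N p s L u ≤ 1 := by
    refine le_trans (lintegral_mono fun z => ENNReal.ofReal_le_ofReal ?_) hmod0
    refine div_denom_mono' (Real.rpow_nonneg (abs_nonneg _) _)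
      (Real.rpow_nonneg (norm_nonneg _) _) (Real.rpow_pos_of_pos hlam0 _) ?_
    exact Real.rpow_le_rpow hlam0.le (le_max_left _ _) (h0p z)
  have hρ1eq : fracModular N p s 1 u = ∫⁻ z, ENNReal.ofReal (g z) := by
    rw [hfrac_eq 1]
    exact lintegral_congr fun z => by rw [Real.one_rpow, div_one]
  have hρ1 : fracModular N p s 1 u ≤ ENNReal.ofReal (L ^ pM) := by
    have h1 : fracModular N p s 1 u ≤
        ENNReal.ofReal (L ^ pM) * fracModular N p s L u := by
      rw [hρ1eq, hfrac_eq L, ← lintegral_const_mul' _ _ ENNReal.ofReal_ne_top]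
      refine lintegral_mono fun z => ?_
      rw [← ENNReal.ofReal_mul (Real.rpow_nonneg hL0.le _)]
      refine ENNReal.ofReal_le_ofReal ?_
      have hLpz : (0:ℝ) < L ^ p z := Real.rpow_pos_of_pos hL0 _
      have hexp : L ^ p z ≤ L ^ pM := Real.rpow_le_rpow_of_exponent_le hL1 (hpge z)
      calc g z = (L ^ p z) * (g z / L ^ p z) := by field_simp
        _ ≤ (L ^ pM) * (g z / L ^ p z) := by
            apply mul_le_mul_of_nonneg_right hexp (div_nonneg (hg0 z) hLpz.le)
    refine h1.trans ?_
    calc ENNReal.ofReal (L ^ pM) * fracModular N p s L u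
        ≤ ENNReal.ofReal (L ^ pM) * 1 := mul_le_mul_right hmodL _
      _ = ENNReal.ofReal (L ^ pM) := mul_one _
  have hδeq : deltaModular N p s u = ∫⁻ z, ENNReal.ofReal (1 / p z * g z) := rfl
  have hδle : deltaModular N p s u ≤ ENNReal.ofReal pm⁻¹ * fracModular N p s 1 u := by
    rw [hδeq, hρ1eq, ← lintegral_const_mul' _ _ ENNReal.ofReal_ne_top]
    refine lintegral_mono fun z => ?_
    rw [← ENNReal.ofReal_mul (by positivity)]
    refine ENNReal.ofReal_le_ofReal ?_
    have hpz : (0:ℝ) < p z := lt_of_lt_of_le hpm0 (hple z)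
    have h2 : 1 / p z ≤ pm⁻¹ := by
      rw [one_div]
      exact inv_anti₀ hpm0 (hple z)
    exact mul_le_mul_of_nonneg_right h2 (hg0 z)
  have hδfin : deltaModular N p s u ≠ ⊤ := by
    refine ne_top_of_le_ne_top ?_ (hδle.trans (mul_le_mul_right hρ1 _))
    exact ENNReal.mul_ne_top ENNReal.ofReal_ne_top ENNReal.ofReal_ne_top
  refine ⟨hδfin, ?_⟩
  set t : ℝ := (deltaModular N p s u).toReal with htdef
  have ht0 : 0 ≤ t := ENNReal.toReal_nonneg
  have hδt : ENNReal.ofReal t = deltaModular N p s u := ENNReal.ofReal_toReal hδfin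
  set Λ : ℝ := max 1 ((pM * t) ^ pm⁻¹) with hΛdef
  have hΛ1 : (1:ℝ) ≤ Λ := le_max_left _ _
  have hΛ0 : (0:ℝ) < Λ := lt_of_lt_of_le one_pos hΛ1
  have hΛpm : pM * t ≤ Λ ^ pm := by
    calc pM * t = ((pM * t) ^ pm⁻¹) ^ pm :=
          (Real.rpow_inv_rpow (by positivity) hpm0.ne').symm
      _ ≤ Λ ^ pm := Real.rpow_le_rpow (Real.rpow_nonneg (by positivity) _)
          (le_max_right _ _) hpm0.le
  have hρ1δ : fracModular N p s 1 u ≤ ENNReal.ofReal pM * deltaModular N p s u := by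
    rw [hρ1eq, hδeq, ← lintegral_const_mul' _ _ ENNReal.ofReal_ne_top]
    refine lintegral_mono fun z => ?_
    rw [← ENNReal.ofReal_mul hpM0]
    refine ENNReal.ofReal_le_ofReal ?_
    have hpz : (0:ℝ) < p z := lt_of_lt_of_le hpm0 (hple z)
    calc g z = p z * (1 / p z * g z) := by field_simp
      _ ≤ pM * (1 / p z * g z) := mul_le_mul_of_nonneg_right (hpge z) (by positivity)
  have hmodΛ : fracModular N p s Λ u ≤ 1 := by
    have hΛpmpos : (0:ℝ) < Λ ^ pm := Real.rpow_pos_of_pos hΛ0 _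
    have hcne : ENNReal.ofReal (Λ ^ pm) ≠ 0 := by
      simp [ENNReal.ofReal_eq_zero, not_le, hΛpmpos]
    have h1 : fracModular N p s Λ u ≤ fracModular N p s 1 u / ENNReal.ofReal (Λ ^ pm) := by
      rw [hfrac_eq Λ, hρ1eq]
      calc ∫⁻ z, ENNReal.ofReal (g z / Λ ^ p z)
          ≤ ∫⁻ z, ENNReal.ofReal (g z / Λ ^ pm) := by
            refine lintegral_mono fun z => ENNReal.ofReal_le_ofReal ?_
            exact div_le_div_of_nonneg_left (hg0 z) (Real.rpow_pos_of_pos hΛ0 _)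
              (Real.rpow_le_rpow_of_exponent_le hΛ1 (hple z))
        _ = ∫⁻ z, ENNReal.ofReal (g z) / ENNReal.ofReal (Λ ^ pm) :=
            lintegral_congr fun z => ENNReal.ofReal_div_of_pos hΛpmpos
        _ = (∫⁻ z, ENNReal.ofReal (g z)) / ENNReal.ofReal (Λ ^ pm) := by
            simp only [ENNReal.div_eq_inv_mul]
            exact lintegral_const_mul' _ _ (ENNReal.inv_ne_top.mpr hcne)
    refine h1.trans ?_
    have h2 : fracModular N p s 1 u ≤ ENNReal.ofReal (Λ ^ pm) := by
      refine hρ1δ.trans ?_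
      rw [← hδt, ← ENNReal.ofReal_mul hpM0]
      exact ENNReal.ofReal_le_ofReal hΛpm
    exact le_trans (ENNReal.div_le_div_right h2 _) ENNReal.div_self_le_one
  have hfracΛ : fracNorm N p s u ≤ Λ :=
    csInf_le ⟨0, fun x hx => hx.1.le⟩ ⟨hΛ0, hmodΛ⟩
  -- the admissible lambda
  set lam : ℝ := C * Λ + 1 with hlamdef
  have hlampos : (0:ℝ) < lam := by positivity
  have hlamgt : C * fracNorm N p s u < lam := by
    have := mul_le_mul_of_nonneg_left hfracΛ hC.le
    linarith
  -- truncations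
  set uT : ℕ → EuclideanSpace ℝ (Fin N) → ℝ :=
    fun n x => max (min (u x) (n : ℝ)) (-(n : ℝ)) with huTdef
  have habs : ∀ n x, |uT n x| = min |u x| (n : ℝ) := by
    intro n x
    have hn : (0:ℝ) ≤ (n : ℝ) := n.cast_nonneg
    rcases le_total 0 (u x) with h | h
    · have h1 : -(n:ℝ) ≤ min (u x) (n:ℝ) := le_min (by linarith) (by linarith)
      rw [show uT n x = max (min (u x) (n:ℝ)) (-(n:ℝ)) from rfl, max_eq_left h1,
        abs_of_nonneg h, abs_of_nonneg (le_min h hn)]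
    · have h1 : min (u x) (n:ℝ) = u x := min_eq_left (by linarith)
      rw [show uT n x = max (min (u x) (n:ℝ)) (-(n:ℝ)) from rfl, h1]
      have h2 : max (u x) (-(n:ℝ)) ≤ 0 := max_le h (by linarith)
      rw [abs_of_nonpos h2, abs_of_nonpos h, ← min_neg_neg, neg_neg]
  have hTlip : ∀ n x y, |uT n x - uT n y| ≤ |u x - u y| := by
    intro n x y
    have hminlip : ∀ a b c : ℝ, |min a c - min b c| ≤ |a - b| := by
      intro a b c
      have h1 := abs_max_sub_max_le_abs (-a) (-b) (-c)
      rw [max_neg_neg, max_neg_neg] at h1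
      calc |min a c - min b c| = |(-(a ⊓ c)) - (-(b ⊓ c))| := by
            rw [show -(a ⊓ c) - -(b ⊓ c) = -((a ⊓ c) - (b ⊓ c)) by ring, abs_neg]
        _ ≤ |(-a) - (-b)| := h1
        _ = |a - b| := by rw [show -a - -b = -(a - b) by ring, abs_neg]
    calc |uT n x - uT n y| ≤ |min (u x) (n:ℝ) - min (u y) (n:ℝ)| :=
          abs_max_sub_max_le_abs _ _ _
      _ ≤ |u x - u y| := hminlip _ _ _
  have hTfracmono : ∀ (n : ℕ) (l : ℝ), 0 < l →
      fracModular N p s l (uT n) ≤ fracModular N p s l u := by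
    intro n l hl
    refine lintegral_mono fun z => ENNReal.ofReal_le_ofReal ?_
    have hden : (0:ℝ) ≤ l ^ p z * ‖z.1 - z.2‖ ^ ((N : ℝ) + p z * s z) :=
      mul_nonneg (Real.rpow_pos_of_pos hl _).le (Real.rpow_nonneg (norm_nonneg _) _)
    refine num_div_mono' ?_ hden
    exact Real.rpow_le_rpow (abs_nonneg _) (hTlip n z.1 z.2) (h0p z)
  have hTmem : ∀ n, memX0 N p s Ω (uT n) := by
    intro n
    refine ⟨(humeas.min measurable_const).max measurable_const, ?_,
      lam0, hlam0, (hTfracmono n lam0 hlam0).trans hmod0⟩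
    filter_upwards [huvan] with x hx hxΩ
    rw [show uT n x = max (min (u x) (n:ℝ)) (-(n:ℝ)) from rfl, hx hxΩ]
    rw [min_eq_left n.cast_nonneg, max_eq_left (neg_nonpos.mpr n.cast_nonneg)]
  have hTfrac : ∀ n, fracNorm N p s (uT n) ≤ fracNorm N p s u := by
    intro n
    refine csInf_le_csInf ⟨0, fun x hx => hx.1.le⟩ ⟨lam0, hlam0, hmod0⟩ ?_
    rintro l ⟨hl0, hl1⟩
    exact ⟨hl0, (hTfracmono n l hl0).trans hl1⟩
  have hTlux : ∀ n, luxNorm Ω (fun x => p (x, x)) (uT n) < lam := by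
    intro n
    refine lt_of_le_of_lt (hembed (uT n) (hTmem n)) ?_
    have h1 : C * fracNorm N p s (uT n) ≤ C * fracNorm N p s u :=
      mul_le_mul_of_nonneg_left (hTfrac n) hC.le
    linarith
  have hTne : ∀ n : ℕ,
      {l : ℝ | 0 < l ∧ ∫⁻ x in Ω, ENNReal.ofReal (|uT n x / l| ^ p (x, x)) ≤ 1}.Nonempty := by
    intro n
    set K : ℝ := max (volume Ω).toReal 1 with hKdef
    have hK1 : (1:ℝ) ≤ K := le_max_right _ _
    have hK0 : (0:ℝ) < K := lt_of_lt_of_le one_pos hK1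
    set K' : ℝ := K ^ pm⁻¹ with hK'def
    have hK'1 : (1:ℝ) ≤ K' := by
      calc (1:ℝ) = 1 ^ pm⁻¹ := (Real.one_rpow _).symm
        _ ≤ K ^ pm⁻¹ := Real.rpow_le_rpow zero_le_one hK1 (by positivity)
    have hK'0 : (0:ℝ) < K' := lt_of_lt_of_le one_pos hK'1
    set lB : ℝ := ((n:ℝ) + 1) * K' with hlBdef
    have hlB0 : (0:ℝ) < lB := by positivity
    refine ⟨lB, hlB0, ?_⟩
    have hptw : ∀ x, |uT n x / lB| ^ p (x, x) ≤ 1 / K := by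
      intro x
      have h1 : |uT n x| ≤ (n:ℝ) := by rw [habs]; exact min_le_right _ _
      have h2 : |uT n x / lB| ≤ 1 / K' := by
        rw [abs_div, abs_of_pos hlB0, div_le_div_iff₀ hlB0 hK'0]
        calc |uT n x| * K' ≤ ((n:ℝ) + 1) * K' := by
              apply mul_le_mul_of_nonneg_right (by linarith) hK'0.le
          _ = 1 * lB := by rw [hlBdef]; ring
      have h3 : (0:ℝ) < 1 / K' := by positivity
      have h4 : 1 / K' ≤ 1 := by
        rw [div_le_one hK'0]; exact hK'1
      calc |uT n x / lB| ^ p (x, x) ≤ (1 / K') ^ p (x, x) :=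
            Real.rpow_le_rpow (abs_nonneg _) h2 (h0p _)
        _ ≤ (1 / K') ^ pm := Real.rpow_le_rpow_of_exponent_ge h3 h4 (hple _)
        _ = 1 / K := by
            have hK'pm : K' ^ pm = K := Real.rpow_inv_rpow hK0.le hpm0.ne'
            rw [one_div, one_div, Real.inv_rpow hK'0.le, hK'pm]
    calc ∫⁻ x in Ω, ENNReal.ofReal (|uT n x / lB| ^ p (x, x))
        ≤ ∫⁻ _x in Ω, ENNReal.ofReal (1 / K) :=
          setLIntegral_mono' hΩmeas fun x _ => ENNReal.ofReal_le_ofReal (hptw x)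
      _ = ENNReal.ofReal (1 / K) * volume Ω := setLIntegral_const _ _
      _ ≤ ENNReal.ofReal (1 / K) * ENNReal.ofReal K := by
          refine mul_le_mul_right ?_ _
          rw [← ENNReal.ofReal_toReal hΩvol]
          exact ENNReal.ofReal_le_ofReal (le_max_left _ _)
      _ = 1 := by
          rw [← ENNReal.ofReal_mul (by positivity), one_div,
            inv_mul_cancel₀ hK0.ne', ENNReal.ofReal_one]
  have hTmod : ∀ n, ∫⁻ x in Ω, ENNReal.ofReal (|uT n x / lam| ^ p (x, x)) ≤ 1 := by
    intro n
    have hlt : sInf {l : ℝ | 0 < l ∧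
        ∫⁻ x in Ω, ENNReal.ofReal (|uT n x / l| ^ p (x, x)) ≤ 1} < lam := hTlux n
    obtain ⟨μ, ⟨hμ0, hμmod⟩, hμlt⟩ := exists_lt_of_csInf_lt (hTne n) hlt
    refine le_trans ?_ hμmod
    refine setLIntegral_mono' hΩmeas fun x _ => ENNReal.ofReal_le_ofReal ?_
    refine Real.rpow_le_rpow (abs_nonneg _) ?_ (h0p _)
    rw [abs_div, abs_div, abs_of_pos hlampos, abs_of_pos hμ0]
    exact div_le_div_of_nonneg_left (abs_nonneg _) hμ0 hμlt.le
  -- monotone convergence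
  have hmeasn : ∀ n : ℕ,
      Measurable fun x => ENNReal.ofReal (|uT n x / lam| ^ p (x, x)) := by
    intro n
    have hbase : Measurable fun x => |uT n x / lam| :=
      (((humeas.min measurable_const).max measurable_const).div_const lam).abs
    exact (measurable_rpow2.comp (hbase.prodMk hpdiag)).ennreal_ofReal
  have hmono : Monotone fun n : ℕ =>
      fun x => ENNReal.ofReal (|uT n x / lam| ^ p (x, x)) := by
    intro n k hnk
    intro x
    refine ENNReal.ofReal_le_ofReal (Real.rpow_le_rpow (abs_nonneg _) ?_ (h0p _))
    rw [abs_div, abs_div, abs_of_pos hlampos, habs, habs]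
    exact num_div_mono' (min_le_min le_rfl (Nat.cast_le.mpr hnk)) hlampos.le
  have hsup : ∀ x, (⨆ n : ℕ, ENNReal.ofReal (|uT n x / lam| ^ p (x, x)))
      = ENNReal.ofReal (|u x / lam| ^ p (x, x)) := by
    intro x
    refine le_antisymm (iSup_le fun n => ?_) ?_
    · refine ENNReal.ofReal_le_ofReal (Real.rpow_le_rpow (abs_nonneg _) ?_ (h0p _))
      rw [abs_div, abs_div, abs_of_pos hlampos, habs]
      exact num_div_mono' (min_le_left _ _) hlampos.le
    · refine le_iSup_of_le (Nat.ceil |u x|) ?_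
      have h1 : |uT (Nat.ceil |u x|) x| = |u x| := by
        rw [habs]; exact min_eq_left (Nat.le_ceil _)
      refine le_of_eq ?_
      rw [abs_div, abs_div, abs_of_pos hlampos, h1]
  calc ∫⁻ x in Ω, ENNReal.ofReal (|u x / lam| ^ p (x, x))
      = ∫⁻ x in Ω, ⨆ n : ℕ, ENNReal.ofReal (|uT n x / lam| ^ p (x, x)) :=
        lintegral_congr fun x => (hsup x).symm
    _ = ⨆ n : ℕ, ∫⁻ x in Ω, ENNReal.ofReal (|uT n x / lam| ^ p (x, x)) :=
        lintegral_iSup hmeasn hmono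
    _ ≤ 1 := iSup_le hTmod

private lemma holder_int
    (N : ℕ) (Ω : Set (EuclideanSpace ℝ (Fin N))) (hΩmeas : MeasurableSet Ω)
    (p : EuclideanSpace ℝ (Fin N) × EuclideanSpace ℝ (Fin N) → ℝ)
    (pm : ℝ) (hpm1 : 1 < pm) (hple : ∀ z, pm ≤ p z)
    (hpdiag : Measurable fun x : EuclideanSpace ℝ (Fin N) => p (x, x))
    (q : EuclideanSpace ℝ (Fin N) → ℝ)
    (hq : ∀ x ∈ Ω, 1 / p (x, x) + 1 / q x = 1)
    (a : EuclideanSpace ℝ (Fin N) → ℝ) (ham : Measurable a)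
    (la : ℝ) (hla : 0 < la)
    (hamod : ∫⁻ x in Ω, ENNReal.ofReal (|a x / la| ^ q x) ≤ 1)
    (u : EuclideanSpace ℝ (Fin N) → ℝ) (hum : Measurable u)
    (lam : ℝ) (hlam : 0 < lam)
    (humod : ∫⁻ x in Ω, ENNReal.ofReal (|u x / lam| ^ p (x, x)) ≤ 1) :
    |∫ x in Ω, a x * u x| ≤ 2 * (la * lam) := by
  have h0p : ∀ z, (0:ℝ) ≤ p z := fun z => by linarith [hple z]
  have hpt : ∀ x ∈ Ω, ENNReal.ofReal |a x * u x| ≤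
      ENNReal.ofReal (la * lam) *
        (ENNReal.ofReal (|u x / lam| ^ p (x, x)) + ENNReal.ofReal (|a x / la| ^ q x)) := by
    intro x hx
    have hconj : (p (x, x)).HolderConjugate (q x) := by
      refine Real.holderConjugate_iff.mpr ⟨lt_of_lt_of_le hpm1 (hple _), ?_⟩
      rw [← one_div, ← one_div]
      exact hq x hx
    have hq1 : 1 < q x := hconj.symm.lt
    have hyoung := Real.young_inequality (|u x / lam|) (|a x / la|) hconj
    rw [abs_abs, abs_abs] at hyoung
    have hsum : |u x / lam| * |a x / la| ≤
        |u x / lam| ^ p (x, x) + |a x / la| ^ q x := by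
      refine hyoung.trans (add_le_add ?_ ?_)
      · exact div_le_self (Real.rpow_nonneg (abs_nonneg _) _) hconj.lt.le
      · exact div_le_self (Real.rpow_nonneg (abs_nonneg _) _) hq1.le
    have hprod : |a x * u x| = la * lam * (|u x / lam| * |a x / la|) := by
      rw [abs_mul, abs_div, abs_div, abs_of_pos hla, abs_of_pos hlam]
      field_simp
    have hreal : |a x * u x| ≤ la * lam * (|u x / lam| ^ p (x, x) + |a x / la| ^ q x) := by
      rw [hprod]
      exact mul_le_mul_of_nonneg_left hsum (by positivity)
    calc ENNReal.ofReal |a x * u x| ≤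
        ENNReal.ofReal (la * lam * (|u x / lam| ^ p (x, x) + |a x / la| ^ q x)) :=
          ENNReal.ofReal_le_ofReal hreal
      _ = ENNReal.ofReal (la * lam) *
          (ENNReal.ofReal (|u x / lam| ^ p (x, x)) + ENNReal.ofReal (|a x / la| ^ q x)) := by
          rw [ENNReal.ofReal_mul (by positivity),
            ENNReal.ofReal_add (Real.rpow_nonneg (abs_nonneg _) _)
              (Real.rpow_nonneg (abs_nonneg _) _)]
  have hmeasp : Measurable fun x => ENNReal.ofReal (|u x / lam| ^ p (x, x)) := by
    have hbase : Measurable fun x => |u x / lam| := (hum.div_const lam).abs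
    exact (measurable_rpow2.comp (hbase.prodMk hpdiag)).ennreal_ofReal
  have hlint : ∫⁻ x in Ω, ENNReal.ofReal |a x * u x| ≤ ENNReal.ofReal (la * lam) * 2 := by
    calc ∫⁻ x in Ω, ENNReal.ofReal |a x * u x|
        ≤ ∫⁻ x in Ω, ENNReal.ofReal (la * lam) *
            (ENNReal.ofReal (|u x / lam| ^ p (x, x)) + ENNReal.ofReal (|a x / la| ^ q x)) :=
          setLIntegral_mono' hΩmeas hpt
      _ = ENNReal.ofReal (la * lam) *
          ((∫⁻ x in Ω, ENNReal.ofReal (|u x / lam| ^ p (x, x))) +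
            ∫⁻ x in Ω, ENNReal.ofReal (|a x / la| ^ q x)) := by
          rw [lintegral_const_mul' _ _ ENNReal.ofReal_ne_top,
            lintegral_add_left hmeasp]
      _ ≤ ENNReal.ofReal (la * lam) * (1 + 1) :=
          mul_le_mul_right (add_le_add humod hamod) _
      _ = ENNReal.ofReal (la * lam) * 2 := by norm_num
  have habs : |∫ x in Ω, a x * u x| ≤ (∫⁻ x in Ω, ENNReal.ofReal |a x * u x|).toReal := by
    have := MeasureTheory.norm_integral_le_lintegral_norm
      (μ := volume.restrict Ω) (fun x => a x * u x)
    simpa [Real.norm_eq_abs, abs_mul] using this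
  refine habs.trans ?_
  have hfin : ENNReal.ofReal (la * lam) * 2 ≠ ⊤ :=
    ENNReal.mul_ne_top ENNReal.ofReal_ne_top (by norm_num)
  calc (∫⁻ x in Ω, ENNReal.ofReal |a x * u x|).toReal
      ≤ (ENNReal.ofReal (la * lam) * 2).toReal := ENNReal.toReal_mono hfin hlint
    _ = 2 * (la * lam) := by
        rw [ENNReal.toReal_mul, ENNReal.toReal_ofReal (by positivity)]
        norm_num
        ring

set_option maxHeartbeats 1000000 in
theorem energy_bddBelow (N : ℕ) (hN : 1 ≤ N)
    (Ω : Set (EuclideanSpace ℝ (Fin N))) (hΩopen : IsOpen Ω)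
    (hΩbdd : Bornology.IsBounded Ω)
    (p s : EuclideanSpace ℝ (Fin N) × EuclideanSpace ℝ (Fin N) → ℝ)
    (hpc : Continuous p) (hsc : Continuous s)
    (hpsymm : ∀ x y, p (x, y) = p (y, x)) (hssymm : ∀ x y, s (x, y) = s (y, x))
    (hpinf : 1 < ⨅ z, p z) (hpbdd : BddAbove (Set.range p))
    (hsinf : 0 < ⨅ z, s z) (hsbdd : BddAbove (Set.range s))
    (hssup : ⨆ z, s z < 1)
    (m γ : ℝ) (hm : 0 < m) (hγ : 1 / (⨅ z, p z) < γ)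
    (M₁ M₂ : ℝ → ℝ)
    (hM₁c : ContinuousOn M₁ (Set.Ioi 0)) (hM₂c : ContinuousOn M₂ (Set.Ioi 0))
    (hM₁pos : ∀ t : ℝ, 0 < t → 0 < M₁ t) (hM₂pos : ∀ t : ℝ, 0 < t → 0 < M₂ t)
    (hM₁low : ∀ t : ℝ, 0 < t → m * t ^ (γ - 1) ≤ M₁ t)
    (hM₂low : ∀ t : ℝ, 0 < t → m * t ^ (γ - 1) ≤ M₂ t)
    (hM₁int : ∀ t : ℝ, 0 < t → IntegrableOn M₁ (Set.Ioo 0 t) volume)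
    (hM₂int : ∀ t : ℝ, 0 < t → IntegrableOn M₂ (Set.Ioo 0 t) volume)
    (H : ℝ → ℝ → ℝ) (hHc : Continuous fun z : ℝ × ℝ => H z.1 z.2)
    (hHbdd : ∃ CH : ℝ, ∀ x y : ℝ, |H x y| ≤ CH)
    (q : EuclideanSpace ℝ (Fin N) → ℝ)
    (hq : ∀ x ∈ Ω, 1 / p (x, x) + 1 / q x = 1)
    (a b : EuclideanSpace ℝ (Fin N) → ℝ) (ha : Measurable a) (hb : Measurable b)
    (hafin : ∃ lam > (0 : ℝ), ∫⁻ x in Ω, ENNReal.ofReal (|a x / lam| ^ q x) ≤ 1)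
    (hbfin : ∃ lam > (0 : ℝ), ∫⁻ x in Ω, ENNReal.ofReal (|b x / lam| ^ q x) ≤ 1)
    (C : ℝ) (hC : 0 < C)
    (hembed : ∀ u, memX0 N p s Ω u →
      luxNorm Ω (fun x => p (x, x)) u ≤ C * fracNorm N p s u) :
    ∃ c : ℝ, ∀ u v : EuclideanSpace ℝ (Fin N) → ℝ,
      memX0 N p s Ω u → memX0 N p s Ω v →
      c ≤ energy N p s Ω M₁ M₂ H a b u v := by
  have hpmbdd : BddBelow (Set.range p) := by
    by_contra h
    rw [Real.iInf_of_not_bddBelow h] at hpinf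
    linarith
  set pm : ℝ := ⨅ z, p z with hpmdef
  set pM : ℝ := ⨆ z, p z with hpMdef
  have hple : ∀ z, pm ≤ p z := fun z => ciInf_le hpmbdd z
  have hpge : ∀ z, p z ≤ pM := fun z => le_ciSup hpbdd z
  have hpm1 : 1 < pm := hpinf
  have hpm0 : (0:ℝ) < pm := by linarith
  have hpM0 : (0:ℝ) ≤ pM := le_trans (by linarith [hple (0, 0)]) (hpge (0, 0))
  have hΩmeas : MeasurableSet Ω := hΩopen.measurableSet
  have hΩvol : volume Ω ≠ ⊤ := hΩbdd.measure_lt_top.ne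
  have hpdiag : Measurable fun x : EuclideanSpace ℝ (Fin N) => p (x, x) :=
    (hpc.comp (continuous_id.prodMk continuous_id)).measurable
  obtain ⟨la, hla, hamod⟩ := hafin
  obtain ⟨lb, hlb, hbmod⟩ := hbfin
  obtain ⟨CH, hCH⟩ := hHbdd
  have hCH0 : 0 ≤ CH := le_trans (abs_nonneg _) (hCH 0 0)
  set KH : ℝ := CH * (volume Ω).toReal with hKH
  have hHbound : ∀ u v : EuclideanSpace ℝ (Fin N) → ℝ,
      |∫ x in Ω, H (u x) (v x)| ≤ KH := by
    intro u v
    have h1 : |∫ x in Ω, H (u x) (v x)| ≤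
        (∫⁻ x in Ω, ENNReal.ofReal |H (u x) (v x)|).toReal := by
      have := MeasureTheory.norm_integral_le_lintegral_norm
        (μ := volume.restrict Ω) (fun x => H (u x) (v x))
      simpa [Real.norm_eq_abs] using this
    refine h1.trans ?_
    have h2 : ∫⁻ x in Ω, ENNReal.ofReal |H (u x) (v x)| ≤ ENNReal.ofReal CH * volume Ω := by
      calc ∫⁻ x in Ω, ENNReal.ofReal |H (u x) (v x)|
          ≤ ∫⁻ _x in Ω, ENNReal.ofReal CH :=
            setLIntegral_mono' hΩmeas fun x _ => ENNReal.ofReal_le_ofReal (hCH _ _)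
        _ = ENNReal.ofReal CH * volume Ω := setLIntegral_const _ _
    have hfin : ENNReal.ofReal CH * volume Ω ≠ ⊤ :=
      ENNReal.mul_ne_top ENNReal.ofReal_ne_top hΩvol
    calc (∫⁻ x in Ω, ENNReal.ofReal |H (u x) (v x)|).toReal
        ≤ (ENNReal.ofReal CH * volume Ω).toReal := ENNReal.toReal_mono hfin h2
      _ = KH := by rw [ENNReal.toReal_mul, ENNReal.toReal_ofReal hCH0]
  have hβγ : pm⁻¹ < γ := by rwa [one_div] at hγ
  have hβ0 : (0:ℝ) < pm⁻¹ := by positivity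
  have hγ0 : (0:ℝ) < γ := lt_trans hβ0 hβγ
  set Aa : ℝ := 2 * la * (C * pM ^ pm⁻¹) with hAadef
  set Ab : ℝ := 2 * lb * (C * pM ^ pm⁻¹) with hAbdef
  have hAa0 : 0 ≤ Aa := by positivity
  have hAb0 : 0 ≤ Ab := by positivity
  obtain ⟨c₁, hc₁⟩ := coercive_aux (m / γ) γ Aa pm⁻¹ (by positivity) hβ0 hβγ hAa0
  obtain ⟨c₂, hc₂⟩ := coercive_aux (m / γ) γ Ab pm⁻¹ (by positivity) hβ0 hβγ hAb0
  refine ⟨c₁ + c₂ - KH - 2 * la * (C + 1) - 2 * lb * (C + 1), fun u v hu hv => ?_⟩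
  obtain ⟨hδufin, humod⟩ :=
    key_u N Ω hΩmeas hΩvol p s pm pM hpm1 hple hpge C hC hembed hpdiag u hu
  obtain ⟨hδvfin, hvmod⟩ :=
    key_u N Ω hΩmeas hΩvol p s pm pM hpm1 hple hpge C hC hembed hpdiag v hv
  set tu : ℝ := (deltaModular N p s u).toReal with htudef
  set tv : ℝ := (deltaModular N p s v).toReal with htvdef
  have htu0 : 0 ≤ tu := ENNReal.toReal_nonneg
  have htv0 : 0 ≤ tv := ENNReal.toReal_nonneg
  set lamu : ℝ := C * max 1 ((pM * tu) ^ pm⁻¹) + 1 with hlamudef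
  set lamv : ℝ := C * max 1 ((pM * tv) ^ pm⁻¹) + 1 with hlamvdef
  have hlamu0 : 0 < lamu := by positivity
  have hlamv0 : 0 < lamv := by positivity
  have h2a : |∫ x in Ω, a x * u x| ≤ 2 * (la * lamu) :=
    holder_int N Ω hΩmeas p pm hpm1 hple hpdiag q hq a ha la hla hamod u hu.1
      lamu hlamu0 humod
  have h2b : |∫ x in Ω, b x * v x| ≤ 2 * (lb * lamv) :=
    holder_int N Ω hΩmeas p pm hpm1 hple hpdiag q hq b hb lb hlb hbmod v hv.1
      lamv hlamv0 hvmod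
  have hmax : ∀ t : ℝ, 0 ≤ t →
      max 1 ((pM * t) ^ pm⁻¹) ≤ 1 + pM ^ pm⁻¹ * t ^ pm⁻¹ := by
    intro t ht
    have h1 : (pM * t) ^ pm⁻¹ = pM ^ pm⁻¹ * t ^ pm⁻¹ := Real.mul_rpow hpM0 ht
    have h2 : (0:ℝ) ≤ pM ^ pm⁻¹ * t ^ pm⁻¹ := by positivity
    refine max_le (by linarith) (by rw [h1]; linarith)
  have h3a : 2 * (la * lamu) ≤ 2 * la * (C + 1) + Aa * tu ^ pm⁻¹ := by
    have h4 := hmax tu htu0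
    have h5 : lamu ≤ C * (1 + pM ^ pm⁻¹ * tu ^ pm⁻¹) + 1 := by
      have := mul_le_mul_of_nonneg_left h4 hC.le
      rw [hlamudef]; linarith
    have h6 := mul_le_mul_of_nonneg_left h5 (by positivity : (0:ℝ) ≤ 2 * la)
    rw [hAadef]; nlinarith
  have h3b : 2 * (lb * lamv) ≤ 2 * lb * (C + 1) + Ab * tv ^ pm⁻¹ := by
    have h4 := hmax tv htv0
    have h5 : lamv ≤ C * (1 + pM ^ pm⁻¹ * tv ^ pm⁻¹) + 1 := by
      have := mul_le_mul_of_nonneg_left h4 hC.le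
      rw [hlamvdef]; linarith
    have h6 := mul_le_mul_of_nonneg_left h5 (by positivity : (0:ℝ) ≤ 2 * lb)
    rw [hAbdef]; nlinarith
  have h1a : m / γ * tu ^ γ ≤ ∫ τ in Set.Ioo (0:ℝ) tu, M₁ τ :=
    tildeM_low M₁ m γ hm hγ0 hM₁low hM₁int tu htu0
  have h1b : m / γ * tv ^ γ ≤ ∫ τ in Set.Ioo (0:ℝ) tv, M₂ τ :=
    tildeM_low M₂ m γ hm hγ0 hM₂low hM₂int tv htv0
  have hHuv := hHbound u v
  have hcu := hc₁ tu htu0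
  have hcv := hc₂ tv htv0
  have hea : (∫ x in Ω, a x * u x) ≤ 2 * la * (C + 1) + Aa * tu ^ pm⁻¹ :=
    le_trans (le_abs_self _) (h2a.trans h3a)
  have heb : (∫ x in Ω, b x * v x) ≤ 2 * lb * (C + 1) + Ab * tv ^ pm⁻¹ :=
    le_trans (le_abs_self _) (h2b.trans h3b)
  have heH : (∫ x in Ω, H (u x) (v x)) ≤ KH := le_trans (le_abs_self _) hHuv
  unfold energy
  rw [← htudef, ← htvdef]
  linarith
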